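/- Let O be a one-dimensional noetherian domain with normalization Õ finite over O, non-invertible maximal ideals p₁,…,p_r, primes P_{i,j} of Õ over p_i with degrees d_{i,j}, g_i = gcd_j(d_{i,j}) = Σ_j λ_{i,j} d_{i,j}, and Q_i = Σ_j λ_{i,j} P_{i,j} ∈ Div(Õ). Then the kernel of the push-forward f_* : Div(Õ) → Div(O) is generated by the divisors (d_{i,j}/g_i)·Q_i − P_{i,j} for 1 ≤ i ≤ r, 1 ≤ j ≤ r_i. -/

import Mathlib

set_option maxHeartbeats 1000000
set_option synthInstance.maxHeartbeats 400000

noncomputable section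
namespace ChowPaper


open scoped nonZeroDivisors

/-- Composition length of the `Localization.AtPrime p`-module `O_p / a O_p`. -/
def lenQ (R : Type*) [CommRing R] (p : Ideal R) [p.IsPrime] (a : R) : ℕ :=
  ((WithBot.unbotD 0 (Order.krullDim (Submodule (Localization.AtPrime p)
    ((Localization.AtPrime p) ⧸
      (Ideal.span {algebraMap R (Localization.AtPrime p) a}))))).toNat)

/-- `ord_p(x)` for `x = a/b` in the fraction field, defined as
`len(R_p/aR_p) - len(R_p/bR_p)` via a choice of representation `x = a/b`. -/
def ord (R : Type*) [CommRing R] (K : Type*) [Field K] [Algebra R K]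
    (p : Ideal R) [p.IsPrime] (x : K) : ℤ :=
  letI := Classical.dec
  if h : ∃ ab : R × R, ab.2 ≠ 0 ∧ x * algebraMap R K ab.2 = algebraMap R K ab.1 then
    (lenQ R p h.choose.1 : ℤ) - (lenQ R p h.choose.2 : ℤ)
  else 0

/-- The residue degree `[O'/P : O/(P ∩ O)]`. -/
def resDeg (O O' : Type*) [CommRing O] [CommRing O'] [Algebra O O'] (P : Ideal O') : ℕ :=
  letI : Algebra (O ⧸ P.comap (algebraMap O O')) (O' ⧸ P) :=
    (Ideal.quotientMap P (algebraMap O O') le_rfl).toAlgebra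
  Module.finrank (O ⧸ P.comap (algebraMap O O')) (O' ⧸ P)

/-- The group of divisors: the free abelian group on the maximal ideals. -/
abbrev Div (R : Type*) [CommRing R] : Type _ := MaximalSpectrum R →₀ ℤ

/-- The subgroup of principal divisors. -/
def prin (R : Type*) [CommRing R] (K : Type*) [Field K] [Algebra R K] :
    AddSubgroup (Div R) :=
  AddSubgroup.closure {D : Div R | ∃ a : K, a ≠ 0 ∧
    ∀ p : MaximalSpectrum R, D p = @ord R _ K _ _ p.asIdeal p.2.isPrime a}

/-- The Chow group: divisors modulo principal divisors. -/
abbrev Chow (R : Type*) [CommRing R] (K : Type*) [Field K] [Algebra R K] : Type _ :=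
  Div R ⧸ prin R K


open scoped nonZeroDivisors

section Conductor
variable (O : Type*) [CommRing O] [IsDomain O] (K : Type*) [Field K] [Algebra O K]

/-- The conductor `F = {x ∈ K : x·Õ ⊆ O}` of `O`, as an ideal of the
normalization `Õ = integralClosure O K`. -/
def conductorIdeal : Ideal (integralClosure O K) where
  carrier := {x | ∀ y : integralClosure O K, ((x * y : integralClosure O K) : K) ∈ (algebraMap O K).range}
  add_mem' := by
    intro a b ha hb y
    have h : (a + b) * y = a * y + b * y := by ring
    rw [h, Subalgebra.coe_add]
    exact add_mem (ha y) (hb y)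
  zero_mem' := by
    intro y
    rw [zero_mul, Subalgebra.coe_zero]
    exact zero_mem _
  smul_mem' := by
    intro c x hx y
    have h : c • x * y = x * (c * y) := by rw [smul_eq_mul]; ring
    rw [h]
    exact hx (c * y)

/-- Pulling back a maximal ideal of the normalization to a maximal ideal of `O`. -/
def comapMax (P : MaximalSpectrum (integralClosure O K)) : MaximalSpectrum O :=
  ⟨P.asIdeal.comap (algebraMap O (integralClosure O K)),
    @Ideal.isMaximal_comap_of_isIntegral_of_isMaximal O _ (integralClosure O K) _ _ _ P.asIdeal P.2⟩

/-- The push-forward `f_* : Div(Õ) → Div(O)`, sending a maximal ideal `P` to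
`deg(P) · (P ∩ O)`. -/
def pushforward : Div (integralClosure O K) →+ Div O :=
  Finsupp.liftAddHom fun P =>
    zmultiplesHom _ (Finsupp.single (comapMax O K P)
      (resDeg O (integralClosure O K) P.asIdeal : ℤ))
end Conductor

-- helper lemmas
theorem resDeg_pos (O O' : Type*) [CommRing O] [Nontrivial O'] [CommRing O'] [Algebra O O']
    [Module.Finite O O'] [Algebra.IsIntegral O O']
    (P : Ideal O') [hP : P.IsMaximal] : 0 < resDeg O O' P := by
  letI : Algebra (O ⧸ P.comap (algebraMap O O')) (O' ⧸ P) :=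
    (Ideal.quotientMap P (algebraMap O O') le_rfl).toAlgebra
  have hp : (P.comap (algebraMap O O')).IsMaximal :=
    Ideal.isMaximal_comap_of_isIntegral_of_isMaximal P
  letI : Field (O ⧸ P.comap (algebraMap O O')) := Ideal.Quotient.field _
  letI : Field (O' ⧸ P) := Ideal.Quotient.field _
  haveI : IsScalarTower O (O ⧸ P.comap (algebraMap O O')) (O' ⧸ P) :=
    IsScalarTower.of_algebraMap_eq fun x => by
      show Ideal.Quotient.mk P (algebraMap O O' x) = _
      rfl
  haveI : Module.Finite O (O' ⧸ P) :=
    Module.Finite.of_surjective (Ideal.Quotient.mkₐ O P).toLinearMap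
      (Ideal.Quotient.mk_surjective)
  haveI : Module.Finite (O ⧸ P.comap (algebraMap O O')) (O' ⧸ P) :=
    Module.Finite.of_restrictScalars_finite O _ _
  exact Module.finrank_pos

section Helpers
variable (O : Type*) [CommRing O] [IsDomain O] (K : Type*) [Field K] [Algebra O K]

theorem pushforward_single (P : MaximalSpectrum (integralClosure O K)) (n : ℤ) :
    pushforward O K (Finsupp.single P n) =
      Finsupp.single (comapMax O K P) (n * (resDeg O (integralClosure O K) P.asIdeal : ℤ)) := by
  rw [pushforward, Finsupp.liftAddHom_apply_single]
  show n • Finsupp.single _ _ = _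
  rw [Finsupp.smul_single, smul_eq_mul]

open Classical in
theorem pushforward_apply (D : Div (integralClosure O K)) (p : MaximalSpectrum O) :
    pushforward O K D p = ∑ P ∈ D.support,
      if comapMax O K P = p then D P * (resDeg O (integralClosure O K) P.asIdeal : ℤ) else 0 := by
  conv_lhs => rw [← Finsupp.sum_single D]
  rw [Finsupp.sum, map_sum, Finsupp.finset_sum_apply]
  refine Finset.sum_congr rfl fun P hP => ?_
  rw [pushforward_single, Finsupp.single_apply]

theorem good_unique (p : MaximalSpectrum O)
    (hp : p.asIdeal ⊔ (conductorIdeal O K).comap (algebraMap O (integralClosure O K)) = ⊤)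
    (P P' : MaximalSpectrum (integralClosure O K))
    (hP : comapMax O K P = p) (hP' : comapMax O K P' = p) : P = P' := by
  obtain ⟨b, hbc, hbp⟩ : ∃ b ∈ (conductorIdeal O K).comap (algebraMap O (integralClosure O K)),
      b ∉ p.asIdeal := by
    by_contra h
    push_neg at h
    have hle : p.asIdeal ⊔ (conductorIdeal O K).comap (algebraMap O (integralClosure O K))
        ≤ p.asIdeal := sup_le le_rfl h
    rw [hp] at hle
    exact p.2.ne_top (top_le_iff.mp hle)
  have key : ∀ Q Q' : MaximalSpectrum (integralClosure O K), comapMax O K Q = p →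
      comapMax O K Q' = p → Q.asIdeal ≤ Q'.asIdeal := by
    intro Q Q' hQ hQ' y hy
    obtain ⟨z, hz⟩ := hbc y
    have hz' : algebraMap O (integralClosure O K) z
        = algebraMap O (integralClosure O K) b * y := by
      apply Subtype.ext
      exact hz
    have hzQ : z ∈ Q.asIdeal.comap (algebraMap O (integralClosure O K)) := by
      show algebraMap O (integralClosure O K) z ∈ Q.asIdeal
      rw [hz']
      exact Ideal.mul_mem_left _ _ hy
    have hzp : z ∈ p.asIdeal := by rw [← hQ]; exact hzQ
    have hzQ' : algebraMap O (integralClosure O K) z ∈ Q'.asIdeal := by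
      have : z ∈ (comapMax O K Q').asIdeal := by rw [hQ']; exact hzp
      exact this
    rw [hz'] at hzQ'
    have hbQ' : algebraMap O (integralClosure O K) b ∉ Q'.asIdeal := by
      intro hmem
      apply hbp
      rw [← hQ']
      exact hmem
    exact (Q'.2.isPrime.mem_or_mem hzQ').resolve_left hbQ'
  exact MaximalSpectrum.ext (le_antisymm (key P P' hP hP') (key P' P hP' hP))
end Helpers

theorem stmt9 (O : Type*) [CommRing O] [IsDomain O] [IsNoetherianRing O] [Ring.DimensionLEOne O]
    (K : Type*) [Field K] [Algebra O K] [IsFractionRing O K]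
    [Module.Finite O (integralClosure O K)]
    (bad : Finset (MaximalSpectrum O))
    (hbad : ∀ p : MaximalSpectrum O, p ∈ bad ↔
      ¬ (p.asIdeal ⊔ (conductorIdeal O K).comap (algebraMap O (integralClosure O K)) = ⊤))
    (above : MaximalSpectrum O → Finset (MaximalSpectrum (integralClosure O K)))
    (habove : ∀ (p : MaximalSpectrum O) (P : MaximalSpectrum (integralClosure O K)),
      P ∈ above p ↔ comapMax O K P = p)
    (lam : MaximalSpectrum (integralClosure O K) → ℤ)
    (hlam : ∀ p ∈ bad,
      ∑ P ∈ above p, lam P * (resDeg O (integralClosure O K) P.asIdeal : ℤ) =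
        (((above p).gcd fun P => resDeg O (integralClosure O K) P.asIdeal : ℕ) : ℤ)) :
    AddSubgroup.closure {D : Div (integralClosure O K) | ∃ p ∈ bad, ∃ P ∈ above p,
      D = ((resDeg O (integralClosure O K) P.asIdeal : ℤ) /
            (((above p).gcd fun Q => resDeg O (integralClosure O K) Q.asIdeal : ℕ) : ℤ)) •
          (∑ Q ∈ above p, Finsupp.single Q (lam Q)) - Finsupp.single P 1}
      = (pushforward O K).ker := by
  classical
  have hdeg : ∀ P : MaximalSpectrum (integralClosure O K),
      0 < resDeg O (integralClosure O K) P.asIdeal := fun P =>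
    @resDeg_pos O (integralClosure O K) _ _ _ _ _ _ P.asIdeal P.2
  set d : MaximalSpectrum (integralClosure O K) → ℤ :=
    fun P => (resDeg O (integralClosure O K) P.asIdeal : ℤ) with hd
  set g : MaximalSpectrum O → ℤ :=
    fun p => (((above p).gcd fun Q => resDeg O (integralClosure O K) Q.asIdeal : ℕ) : ℤ) with hg
  apply le_antisymm
  · -- closure ≤ ker
    rw [AddSubgroup.closure_le]
    rintro D ⟨p, hp, P, hPa, rfl⟩
    have hcP : comapMax O K P = p := (habove p P).mp hPa
    have hgd : g p ∣ d P := Int.natCast_dvd_natCast.mpr (Finset.gcd_dvd hPa)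
    show pushforward O K _ = 0
    rw [map_sub, map_zsmul, map_sum]
    have h1 : ∀ Q ∈ above p, pushforward O K (Finsupp.single Q (lam Q))
        = Finsupp.single p (lam Q * d Q) := by
      intro Q hQ
      rw [pushforward_single, (habove p Q).mp hQ]
    rw [Finset.sum_congr rfl h1, ← Finsupp.single_finset_sum, hlam p hp,
      pushforward_single, one_mul, hcP, Finsupp.smul_single, smul_eq_mul,
      Int.ediv_mul_cancel hgd, sub_self]
  · -- ker ≤ closure
    intro D hD
    rw [AddMonoidHom.mem_ker] at hD
    -- fiber sums vanish
    have hfiber : ∀ p : MaximalSpectrum O,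
        ∑ P ∈ D.support.filter (fun P => comapMax O K P = p), D P * d P = 0 := by
      intro p
      have := pushforward_apply O K D p
      rw [hD, Finsupp.coe_zero, Pi.zero_apply] at this
      rw [Finset.sum_filter]
      exact this.symm
    -- support lies over bad primes
    have hsupp : ∀ P ∈ D.support, comapMax O K P ∈ bad := by
      intro P hP
      by_contra hgood
      rw [hbad, not_not] at hgood
      have hflt : D.support.filter (fun P' => comapMax O K P' = comapMax O K P) = {P} := by
        apply Finset.eq_singleton_iff_unique_mem.mpr
        exact ⟨Finset.mem_filter.mpr ⟨hP, rfl⟩, fun Q hQ => by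
          obtain ⟨_, hQc⟩ := Finset.mem_filter.mp hQ
          exact good_unique O K _ hgood Q P hQc rfl⟩
      have := hfiber (comapMax O K P)
      rw [hflt, Finset.sum_singleton] at this
      have hd0 : d P ≠ 0 := by
        simp only [hd]
        exact_mod_cast (hdeg P).ne'
      have : D P = 0 := by
        rcases mul_eq_zero.mp this with h | h
        · exact h
        · exact absurd h hd0
      exact Finsupp.mem_support_iff.mp hP this
    -- the sum representation
    have key : D = ∑ P ∈ D.support, (-(D P)) • (((d P) / g (comapMax O K P)) •
        (∑ Q ∈ above (comapMax O K P), Finsupp.single Q (lam Q)) - Finsupp.single P 1) := by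
      have expand : ∀ P : MaximalSpectrum (integralClosure O K),
          (-(D P)) • (((d P) / g (comapMax O K P)) •
            (∑ Q ∈ above (comapMax O K P), Finsupp.single Q (lam Q)) - Finsupp.single P 1)
          = Finsupp.single P (D P) - (D P * (d P / g (comapMax O K P))) •
            (∑ Q ∈ above (comapMax O K P), Finsupp.single Q (lam Q)) := by
        intro P
        rw [neg_smul, smul_sub, smul_smul, neg_sub, Finsupp.smul_single, smul_eq_mul, mul_one]
      rw [Finset.sum_congr rfl fun P _ => expand P, Finset.sum_sub_distrib]
      have hT : ∑ P ∈ D.support, (D P * (d P / g (comapMax O K P))) •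
          (∑ Q ∈ above (comapMax O K P), Finsupp.single Q (lam Q)) = 0 := by
        rw [← Finset.sum_fiberwise_of_maps_to (t := D.support.image (fun P => comapMax O K P))
          (fun P hP => Finset.mem_image_of_mem _ hP)
          (fun P => (D P * (d P / g (comapMax O K P))) •
            (∑ Q ∈ above (comapMax O K P), Finsupp.single Q (lam Q)))]
        apply Finset.sum_eq_zero
        intro p hp
        obtain ⟨P0, hP0s, hP0c⟩ := Finset.mem_image.mp hp
        have hcongr : ∀ P ∈ D.support.filter (fun P => comapMax O K P = p),
            (D P * (d P / g (comapMax O K P))) •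
              (∑ Q ∈ above (comapMax O K P), Finsupp.single Q (lam Q))
            = (D P * (d P / g p)) • (∑ Q ∈ above p, Finsupp.single Q (lam Q)) := by
          intro P hP
          rw [(Finset.mem_filter.mp hP).2]
        rw [Finset.sum_congr rfl hcongr, ← Finset.sum_smul]
        have hg0 : g p ≠ 0 := by
          simp only [hg, ne_eq, Nat.cast_eq_zero]
          intro h0
          exact (hdeg P0).ne' ((Finset.gcd_eq_zero_iff.mp h0) P0 ((habove p P0).mpr hP0c))
        have hcoeff : (∑ P ∈ D.support.filter (fun P => comapMax O K P = p),
            D P * (d P / g p)) * g p = 0 := by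
          rw [Finset.sum_mul]
          have : ∀ P ∈ D.support.filter (fun P => comapMax O K P = p),
              D P * (d P / g p) * g p = D P * d P := by
            intro P hP
            have hPa : P ∈ above p := (habove p P).mpr (Finset.mem_filter.mp hP).2
            have hdvd : g p ∣ d P := Int.natCast_dvd_natCast.mpr (Finset.gcd_dvd hPa)
            rw [mul_assoc, Int.ediv_mul_cancel hdvd]
          rw [Finset.sum_congr rfl this]
          exact hfiber p
        have : (∑ P ∈ D.support.filter (fun P => comapMax O K P = p),
            D P * (d P / g p)) = 0 := by
          rcases mul_eq_zero.mp hcoeff with h | h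
          · exact h
          · exact absurd h hg0
        rw [this, zero_smul]
      rw [hT, sub_zero]
      exact (Finsupp.sum_single D).symm
    rw [key]
    apply AddSubgroup.sum_mem
    intro P hP
    apply AddSubgroup.zsmul_mem
    apply AddSubgroup.subset_closure
    exact ⟨comapMax O K P, hsupp P hP, P, (habove _ P).mpr rfl, rfl⟩


end ChowPaper
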